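/- Let $\{\Delta_t\}_{t\ge0}$ be a stochastic contraction process with average rate $\bar M$, and let $\bar\Delta_t = \frac{1}{t+1}\sum_{i=0}^t \Delta_i$. Then $\mathbb{E}\,\|\bar\Delta_t\|_{\bar M}^2 \le \frac{\mathbb{E}\,\|\Delta_0\|^2}{t+1}$. -/

import Mathlib

open MeasureTheory ProbabilityTheory Matrix

/-- The product `σ`-algebra on matrices (entrywise). -/
instance matrixMeasurableSpace {n : ℕ} : MeasurableSpace (Matrix (Fin n) (Fin n) ℝ) :=
  (inferInstance : MeasurableSpace (Fin n → Fin n → ℝ))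

namespace AvgIterAux

variable {n : ℕ}

lemma psd_dot {A : Matrix (Fin n) (Fin n) ℝ} (hA : A.PosSemidef) (x : Fin n → ℝ) :
    0 ≤ x ⬝ᵥ A *ᵥ x := by simpa using hA.dotProduct_mulVec_nonneg x

lemma transpose_eq {A : Matrix (Fin n) (Fin n) ℝ} (hA : A.PosSemidef) : Aᵀ = A := by
  have h := hA.1
  rwa [Matrix.IsHermitian, conjTranspose_eq_transpose_of_trivial] at h

lemma vecMul_eq {A : Matrix (Fin n) (Fin n) ℝ} (hA : Aᵀ = A) (x : Fin n → ℝ) :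
    x ᵥ* A = A *ᵥ x := by rw [← vecMul_transpose, hA]

lemma symm_dot {A : Matrix (Fin n) (Fin n) ℝ} (hA : Aᵀ = A) (x y : Fin n → ℝ) :
    x ⬝ᵥ A *ᵥ y = y ⬝ᵥ A *ᵥ x := by
  rw [dotProduct_mulVec, vecMul_eq hA, dotProduct_comm]

lemma sq_quad_le {B : Matrix (Fin n) (Fin n) ℝ} (hB : B.PosSemidef)
    (hB' : ((1 : Matrix (Fin n) (Fin n) ℝ) - B).PosSemidef) (x : Fin n → ℝ) :
    (B *ᵥ x) ⬝ᵥ (B *ᵥ x) ≤ x ⬝ᵥ B *ᵥ x := by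
  obtain ⟨C, hCh, hCC⟩ : ∃ C : Matrix (Fin n) (Fin n) ℝ, Cᴴ = C ∧ C * C = B :=
    open scoped MatrixOrder in
    ⟨CFC.sqrt B, (CFC.sqrt_nonneg B).posSemidef.1, CFC.sqrt_mul_sqrt_self B hB.nonneg⟩
  have hD : (Cᴴ * ((1 : Matrix (Fin n) (Fin n) ℝ) - B) * C).PosSemidef :=
    hB'.conjTranspose_mul_mul_same C
  rw [hCh] at hD
  have hEq : C * ((1 : Matrix (Fin n) (Fin n) ℝ) - B) * C = B - B * B := by
    rw [mul_sub, mul_one, sub_mul, hCC]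
    congr 1
    calc C * B * C = (C * C) * (C * C) := by rw [← hCC, mul_assoc, mul_assoc, mul_assoc]
      _ = B * B := by rw [hCC]
  rw [hEq] at hD
  have h0 := psd_dot hD x
  have hBt : Bᵀ = B := transpose_eq hB
  have h1 : x ⬝ᵥ (B - B * B) *ᵥ x = x ⬝ᵥ B *ᵥ x - (B *ᵥ x) ⬝ᵥ (B *ᵥ x) := by
    rw [sub_mulVec, dotProduct_sub]
    congr 1
    rw [← mulVec_mulVec, dotProduct_mulVec, vecMul_eq hBt]
  rw [h1] at h0
  linarith

lemma sum_dotProduct' {ι : Type*} (s : Finset ι) (f : ι → Fin n → ℝ) (v : Fin n → ℝ) :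
    (∑ i ∈ s, f i) ⬝ᵥ v = ∑ i ∈ s, f i ⬝ᵥ v := by
  simp only [dotProduct, Finset.sum_apply, Finset.sum_mul]
  exact Finset.sum_comm

lemma dotProduct_sum' {ι : Type*} (s : Finset ι) (v : Fin n → ℝ) (f : ι → Fin n → ℝ) :
    v ⬝ᵥ (∑ i ∈ s, f i) = ∑ i ∈ s, v ⬝ᵥ f i := by
  simp only [dotProduct, Finset.sum_apply, Finset.mul_sum]
  exact Finset.sum_comm

lemma mulVec_sum' {ι : Type*} (s : Finset ι) (A : Matrix (Fin n) (Fin n) ℝ)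
    (f : ι → Fin n → ℝ) : A *ᵥ (∑ i ∈ s, f i) = ∑ i ∈ s, A *ᵥ f i := by
  simpa only [Matrix.mulVecLin_apply] using map_sum A.mulVecLin f s

lemma double_sum_avg (s : ℕ) (f : ℕ → ℝ) :
    ∑ i ∈ Finset.range s, ∑ j ∈ Finset.range s, (f i + f j) / 2
      = (s : ℝ) * ∑ i ∈ Finset.range s, f i := by
  have h1 : ∀ i, ∑ j ∈ Finset.range s, (f i + f j) / 2
      = (s : ℝ) * (f i / 2) + (∑ j ∈ Finset.range s, f j) / 2 := by
    intro i
    simp only [add_div, Finset.sum_add_distrib, Finset.sum_const, Finset.card_range,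
      nsmul_eq_mul, Finset.sum_div]
  rw [Finset.sum_congr rfl fun i _ => h1 i]
  simp only [Finset.sum_add_distrib, Finset.sum_const, Finset.card_range, nsmul_eq_mul,
    ← Finset.mul_sum]
  rw [← Finset.sum_div]
  ring

lemma sum_quad_le {A : Matrix (Fin n) (Fin n) ℝ} (hA : A.PosSemidef) (s : ℕ)
    (x : ℕ → Fin n → ℝ) :
    (∑ i ∈ Finset.range s, x i) ⬝ᵥ A *ᵥ (∑ i ∈ Finset.range s, x i)
      ≤ (s : ℝ) * ∑ i ∈ Finset.range s, x i ⬝ᵥ A *ᵥ x i := by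
  have hAt := transpose_eq hA
  have pair : ∀ y z : Fin n → ℝ,
      y ⬝ᵥ A *ᵥ z ≤ (y ⬝ᵥ A *ᵥ y + z ⬝ᵥ A *ᵥ z) / 2 := by
    intro y z
    have h := psd_dot hA (y - z)
    have e : (y - z) ⬝ᵥ A *ᵥ (y - z)
        = y ⬝ᵥ A *ᵥ y - y ⬝ᵥ A *ᵥ z - z ⬝ᵥ A *ᵥ y + z ⬝ᵥ A *ᵥ z := by
      simp only [mulVec_sub, sub_dotProduct, dotProduct_sub]
      ring
    rw [e, symm_dot hAt z y] at h
    linarith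
  have expand : (∑ i ∈ Finset.range s, x i) ⬝ᵥ A *ᵥ (∑ i ∈ Finset.range s, x i)
      = ∑ i ∈ Finset.range s, ∑ j ∈ Finset.range s, x i ⬝ᵥ A *ᵥ x j := by
    rw [mulVec_sum', sum_dotProduct']
    exact Finset.sum_congr rfl fun i _ => dotProduct_sum' _ _ _
  rw [expand, ← double_sum_avg s fun i => x i ⬝ᵥ A *ᵥ x i]
  exact Finset.sum_le_sum fun i _ => Finset.sum_le_sum fun j _ => pair _ _

lemma entry_abs_le {A : Matrix (Fin n) (Fin n) ℝ} (hA : A.PosSemidef)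
    (hA' : ((1 : Matrix (Fin n) (Fin n) ℝ) - A).PosSemidef) (j k : Fin n) :
    |A j k| ≤ 1 := by
  have hAt := transpose_eq hA
  have quad_le : ∀ y : Fin n → ℝ, y ⬝ᵥ A *ᵥ y ≤ y ⬝ᵥ y := by
    intro y
    have h := psd_dot hA' y
    rw [sub_mulVec, one_mulVec, dotProduct_sub] at h
    linarith
  have bil : ∀ a b : Fin n, (Pi.single a (1:ℝ)) ⬝ᵥ A *ᵥ (Pi.single b 1) = A a b := by
    intro a b
    rw [mulVec_single, single_dotProduct]
    simp
  have diag_nonneg : ∀ a, 0 ≤ A a a := by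
    intro a
    have := psd_dot hA (Pi.single a 1)
    rwa [bil a a] at this
  have diag_le : ∀ a, A a a ≤ 1 := by
    intro a
    have := quad_le (Pi.single a 1)
    rw [bil a a] at this
    simpa using this
  rcases eq_or_ne j k with rfl | hjk
  · rw [abs_le]
    exact ⟨by linarith [diag_nonneg j], diag_le j⟩
  · have hsymm : A k j = A j k := by
      have h := symm_dot hAt (Pi.single j (1:ℝ)) (Pi.single k (1:ℝ))
      rw [bil j k, bil k j] at h
      exact h.symm
    have duu : ∀ a : Fin n, Pi.single a (1:ℝ) ⬝ᵥ Pi.single a 1 = 1 := by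
      intro a; rw [single_dotProduct]; simp
    have duv : Pi.single j (1:ℝ) ⬝ᵥ Pi.single k (1:ℝ) = 0 := by
      rw [single_dotProduct]; simp [Pi.single_apply, hjk]
    have dvu : Pi.single k (1:ℝ) ⬝ᵥ Pi.single j (1:ℝ) = 0 := by
      rw [single_dotProduct]; simp [Pi.single_apply, hjk.symm]
    have quadp : (Pi.single j (1:ℝ) + Pi.single k (1:ℝ)) ⬝ᵥ A *ᵥ (Pi.single j (1:ℝ) + Pi.single k (1:ℝ))
        = A j j + A k k + 2 * A j k := by
      simp only [mulVec_add, dotProduct_add, add_dotProduct, bil, hsymm]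
      ring
    have quadm : (Pi.single j (1:ℝ) - Pi.single k (1:ℝ)) ⬝ᵥ A *ᵥ (Pi.single j (1:ℝ) - Pi.single k (1:ℝ))
        = A j j + A k k - 2 * A j k := by
      simp only [mulVec_sub, dotProduct_sub, sub_dotProduct, bil, hsymm]
      ring
    have dotp : (Pi.single j (1:ℝ) + Pi.single k (1:ℝ)) ⬝ᵥ (Pi.single j (1:ℝ) + Pi.single k (1:ℝ))
        = (2:ℝ) := by
      simp only [dotProduct_add, add_dotProduct, duu, duv, dvu]
      norm_num
    have h1 : 0 ≤ A j j + A k k + 2 * A j k := by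
      have := psd_dot hA (Pi.single j (1:ℝ) + Pi.single k (1:ℝ)); rwa [quadp] at this
    have h2 : A j j + A k k + 2 * A j k ≤ 2 := by
      have := quad_le (Pi.single j (1:ℝ) + Pi.single k (1:ℝ)); rwa [quadp, dotp] at this
    have h3 : 0 ≤ A j j + A k k - 2 * A j k := by
      have := psd_dot hA (Pi.single j (1:ℝ) - Pi.single k (1:ℝ)); rwa [quadm] at this
    rw [abs_le]
    constructor
    · linarith [diag_le j, diag_le k]
    · linarith [diag_nonneg j, diag_nonneg k]

end AvgIterAux

open AvgIterAux

/-- for a stochastic contraction process with average rate `M̄`,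
the averaged iterate `Δ̄_t = (1/(t+1)) ∑_{i=0}^t Δ_i` satisfies
`𝔼 ‖Δ̄_t‖²_{M̄} ≤ 𝔼‖Δ_0‖² / (t+1)`. -/
theorem averaged_iterate {n : ℕ} {Ω : Type*} [MeasurableSpace Ω]
    (μ : Measure Ω) [IsProbabilityMeasure μ]
    (M : ℕ → Ω → Matrix (Fin n) (Fin n) ℝ)
    (Δ : ℕ → Ω → (Fin n → ℝ))
    (Mbar : Matrix (Fin n) (Fin n) ℝ)
    (hMmeas : ∀ t, Measurable (M t))
    (hΔmeas : ∀ t, Measurable (Δ t))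
    (hpsd : ∀ t ω, (M t ω).PosSemidef)
    (hcontr : ∀ t ω, ((1 : Matrix (Fin n) (Fin n) ℝ) - M t ω).PosSemidef)
    (hmean : ∀ t i j, (∫ ω, M t ω i j ∂μ) = Mbar i j)
    (hrec : ∀ t ω, Δ (t + 1) ω = ((1 : Matrix (Fin n) (Fin n) ℝ) - M t ω) *ᵥ Δ t ω)
    (hindep : ∀ t, IndepFun (Δ t) (M t) μ)
    (hint : Integrable (fun ω => Δ 0 ω ⬝ᵥ Δ 0 ω) μ)
    (t : ℕ) :
    (∫ ω, (((t : ℝ) + 1)⁻¹ • ∑ i ∈ Finset.range (t + 1), Δ i ω) ⬝ᵥ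
        (Mbar *ᵥ (((t : ℝ) + 1)⁻¹ • ∑ i ∈ Finset.range (t + 1), Δ i ω)) ∂μ) ≤
      (∫ ω, Δ 0 ω ⬝ᵥ Δ 0 ω ∂μ) / ((t : ℝ) + 1) := by
  classical
  -- componentwise measurability
  have hMe : ∀ s j k, Measurable fun ω => M s ω j k := fun s j k =>
    (measurable_pi_apply k).comp ((measurable_pi_apply j).comp (hMmeas s))
  have hΔe : ∀ i j, Measurable fun ω => Δ i ω j := fun i j =>
    (measurable_pi_apply j).comp (hΔmeas i)
  -- basic pointwise facts
  have hNnn : ∀ i ω, 0 ≤ Δ i ω ⬝ᵥ Δ i ω := by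
    intro i ω
    simp only [dotProduct]
    exact Finset.sum_nonneg fun j _ => mul_self_nonneg _
  have hqnn : ∀ i ω, 0 ≤ Δ i ω ⬝ᵥ (M i ω *ᵥ Δ i ω) := fun i ω => psd_dot (hpsd i ω) _
  have key : ∀ i ω, Δ i ω ⬝ᵥ (M i ω *ᵥ Δ i ω) + Δ (i+1) ω ⬝ᵥ Δ (i+1) ω
      ≤ Δ i ω ⬝ᵥ Δ i ω := by
    intro i ω
    have hB := hcontr i ω
    have hB' : ((1 : Matrix (Fin n) (Fin n) ℝ) - (1 - M i ω)).PosSemidef := by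
      simpa using hpsd i ω
    have h := sq_quad_le hB hB' (Δ i ω)
    have e : Δ i ω ⬝ᵥ ((1 - M i ω) *ᵥ Δ i ω)
        = Δ i ω ⬝ᵥ Δ i ω - Δ i ω ⬝ᵥ (M i ω *ᵥ Δ i ω) := by
      rw [sub_mulVec, dotProduct_sub, one_mulVec]
    rw [hrec i ω]
    rw [e] at h
    linarith
  have hmono : ∀ i ω, Δ (i+1) ω ⬝ᵥ Δ (i+1) ω ≤ Δ i ω ⬝ᵥ Δ i ω := by
    intro i ω
    have h1 := key i ω
    have h2 := hqnn i ω
    linarith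
  have hle0 : ∀ i ω, Δ i ω ⬝ᵥ Δ i ω ≤ Δ 0 ω ⬝ᵥ Δ 0 ω := by
    intro i
    induction i with
    | zero => exact fun ω => le_refl _
    | succ k ih => exact fun ω => le_trans (hmono k ω) (ih ω)
  have htel : ∀ s ω, (∑ i ∈ Finset.range s, Δ i ω ⬝ᵥ (M i ω *ᵥ Δ i ω)) + Δ s ω ⬝ᵥ Δ s ω
      ≤ Δ 0 ω ⬝ᵥ Δ 0 ω := by
    intro s
    induction s with
    | zero => intro ω; simp
    | succ k ih =>
      intro ω
      rw [Finset.sum_range_succ]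
      have h1 := key k ω
      have h2 := ih ω
      linarith
  have htelq : ∀ s ω, (∑ i ∈ Finset.range s, Δ i ω ⬝ᵥ (M i ω *ᵥ Δ i ω)) ≤ Δ 0 ω ⬝ᵥ Δ 0 ω := by
    intro s ω
    have h1 := htel s ω
    have h2 := hNnn s ω
    linarith
  -- measurability / integrability
  have hNmeas : ∀ i, Measurable fun ω => Δ i ω ⬝ᵥ Δ i ω := by
    intro i
    simp only [dotProduct]
    exact Finset.measurable_sum _ fun j _ => (hΔe i j).mul (hΔe i j)
  have hNint : ∀ i, Integrable (fun ω => Δ i ω ⬝ᵥ Δ i ω) μ := fun i =>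
    hint.mono' (hNmeas i).aestronglyMeasurable (Filter.Eventually.of_forall fun ω => by
      rw [Real.norm_eq_abs, abs_of_nonneg (hNnn i ω)]; exact hle0 i ω)
  have hqmeas : ∀ i, Measurable fun ω => Δ i ω ⬝ᵥ (M i ω *ᵥ Δ i ω) := by
    intro i
    simp only [dotProduct, mulVec]
    exact Finset.measurable_sum _ fun j _ => (hΔe i j).mul
      (Finset.measurable_sum _ fun k _ => (hMe i j k).mul (hΔe i k))
  have hqle : ∀ i ω, Δ i ω ⬝ᵥ (M i ω *ᵥ Δ i ω) ≤ Δ 0 ω ⬝ᵥ Δ 0 ω := by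
    intro i ω
    have h1 := key i ω
    have h2 := hNnn (i+1) ω
    have h3 := hle0 i ω
    linarith
  have hqint : ∀ i, Integrable (fun ω => Δ i ω ⬝ᵥ (M i ω *ᵥ Δ i ω)) μ := fun i =>
    hint.mono' (hqmeas i).aestronglyMeasurable (Filter.Eventually.of_forall fun ω => by
      rw [Real.norm_eq_abs, abs_of_nonneg (hqnn i ω)]; exact hqle i ω)
  have hsq : ∀ i ω (j : Fin n), Δ i ω j * Δ i ω j ≤ Δ i ω ⬝ᵥ Δ i ω := by
    intro i ω j
    simp only [dotProduct]
    exact Finset.single_le_sum (fun l _ => mul_self_nonneg (Δ i ω l)) (Finset.mem_univ j)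
  have hprodbd : ∀ i ω (j k : Fin n), |Δ i ω j * Δ i ω k| ≤ Δ 0 ω ⬝ᵥ Δ 0 ω := by
    intro i ω j k
    have h1 := hsq i ω j
    have h2 := hsq i ω k
    have h3 := hle0 i ω
    rw [abs_le]
    constructor
    · nlinarith [sq_nonneg (Δ i ω j + Δ i ω k)]
    · nlinarith [sq_nonneg (Δ i ω j - Δ i ω k)]
  have hprodint : ∀ i (j k : Fin n), Integrable (fun ω => Δ i ω j * Δ i ω k) μ := fun i j k =>
    hint.mono' ((hΔe i j).mul (hΔe i k)).aestronglyMeasurable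
      (Filter.Eventually.of_forall fun ω => by
        rw [Real.norm_eq_abs]; exact hprodbd i ω j k)
  have hMbd : ∀ s ω (j k : Fin n), |M s ω j k| ≤ 1 := fun s ω j k =>
    entry_abs_le (hpsd s ω) (hcontr s ω) j k
  -- symmetry of entries
  have hsym_entry : ∀ s ω (j k : Fin n), M s ω k j = M s ω j k := by
    intro s ω j k
    have hAt := transpose_eq (hpsd s ω)
    calc M s ω k j = (M s ω)ᵀ j k := (transpose_apply _ _ _).symm
      _ = M s ω j k := by rw [hAt]
  have hMbarsymm : ∀ j k : Fin n, Mbar k j = Mbar j k := by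
    intro j k
    rw [← hmean 0 j k, ← hmean 0 k j]
    exact integral_congr_ae (Filter.Eventually.of_forall fun ω => hsym_entry 0 ω j k)
  have hMbarpsd : Mbar.PosSemidef := by
    refine Matrix.PosSemidef.of_dotProduct_mulVec_nonneg ?_ ?_
    · show Mbarᴴ = Mbar
      rw [conjTranspose_eq_transpose_of_trivial]
      ext j k
      rw [transpose_apply]
      exact hMbarsymm j k
    · intro x
      have hstar : star x = x := by simp
      rw [hstar]
      have e1 : ∀ (A : Matrix (Fin n) (Fin n) ℝ), x ⬝ᵥ A *ᵥ x
          = ∑ j, ∑ k, x j * A j k * x k := by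
        intro A
        simp only [dotProduct, mulVec, Finset.mul_sum]
        exact Finset.sum_congr rfl fun j _ => Finset.sum_congr rfl fun k _ =>
          (mul_assoc _ _ _).symm
      have hentint : ∀ (j k : Fin n), Integrable (fun ω => x j * M 0 ω j k * x k) μ := by
        intro j k
        have : Integrable (fun ω => M 0 ω j k) μ :=
          (integrable_const (1:ℝ)).mono' (hMe 0 j k).aestronglyMeasurable
            (Filter.Eventually.of_forall fun ω => by
              rw [Real.norm_eq_abs]; exact hMbd 0 ω j k)
        exact (this.const_mul (x j)).mul_const (x k)
      have hexp : x ⬝ᵥ Mbar *ᵥ x = ∫ ω, x ⬝ᵥ (M 0 ω *ᵥ x) ∂μ := by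
        rw [e1]
        have hterm : ∀ (j k : Fin n), x j * Mbar j k * x k
            = ∫ ω, x j * M 0 ω j k * x k ∂μ := by
          intro j k
          rw [MeasureTheory.integral_mul_const, MeasureTheory.integral_const_mul, hmean]
        calc ∑ j, ∑ k, x j * Mbar j k * x k
            = ∑ j, ∑ k, ∫ ω, x j * M 0 ω j k * x k ∂μ :=
              Finset.sum_congr rfl fun j _ => Finset.sum_congr rfl fun k _ => hterm j k
          _ = ∫ ω, ∑ j, ∑ k, x j * M 0 ω j k * x k ∂μ := by
              rw [integral_finset_sum _ fun j _ =>
                integrable_finset_sum _ fun k _ => hentint j k]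
              exact Finset.sum_congr rfl fun j _ =>
                (integral_finset_sum _ fun k _ => hentint j k).symm
          _ = ∫ ω, x ⬝ᵥ (M 0 ω *ᵥ x) ∂μ := by
              refine integral_congr_ae (Filter.Eventually.of_forall fun ω => ?_)
              exact (e1 (M 0 ω)).symm
      rw [hexp]
      exact integral_nonneg fun ω => psd_dot (hpsd 0 ω) x
  -- expansion of quadratic forms as double sums
  have eexp : ∀ i, (fun ω => Δ i ω ⬝ᵥ (M i ω *ᵥ Δ i ω))
      = fun ω => ∑ j, ∑ k, (Δ i ω j * Δ i ω k) * M i ω j k := by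
    intro i
    funext ω
    simp only [dotProduct, mulVec, Finset.mul_sum]
    exact Finset.sum_congr rfl fun j _ => Finset.sum_congr rfl fun k _ => by ring
  have ebar : ∀ i, (fun ω => Δ i ω ⬝ᵥ (Mbar *ᵥ Δ i ω))
      = fun ω => ∑ j, ∑ k, (Δ i ω j * Δ i ω k) * Mbar j k := by
    intro i
    funext ω
    simp only [dotProduct, mulVec, Finset.mul_sum]
    exact Finset.sum_congr rfl fun j _ => Finset.sum_congr rfl fun k _ => by ring
  have hgint : ∀ i (j k : Fin n), Integrable (fun ω => (Δ i ω j * Δ i ω k) * M i ω j k) μ := by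
    intro i j k
    refine hint.mono' (((hΔe i j).mul (hΔe i k)).mul (hMe i j k)).aestronglyMeasurable
      (Filter.Eventually.of_forall fun ω => ?_)
    rw [Real.norm_eq_abs, abs_mul]
    calc |Δ i ω j * Δ i ω k| * |M i ω j k| ≤ |Δ i ω j * Δ i ω k| * 1 :=
          mul_le_mul_of_nonneg_left (hMbd i ω j k) (abs_nonneg _)
      _ = |Δ i ω j * Δ i ω k| := mul_one _
      _ ≤ Δ 0 ω ⬝ᵥ Δ 0 ω := hprodbd i ω j k
  have hqbarint : ∀ i, Integrable (fun ω => Δ i ω ⬝ᵥ (Mbar *ᵥ Δ i ω)) μ := by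
    intro i
    rw [ebar i]
    exact integrable_finset_sum _ fun j _ => integrable_finset_sum _ fun k _ =>
      (hprodint i j k).mul_const _
  -- equality of expectations via independence
  have hint_eq : ∀ i, (∫ ω, Δ i ω ⬝ᵥ (Mbar *ᵥ Δ i ω) ∂μ)
      = ∫ ω, Δ i ω ⬝ᵥ (M i ω *ᵥ Δ i ω) ∂μ := by
    intro i
    have hstep : ∀ (j k : Fin n), (∫ ω, (Δ i ω j * Δ i ω k) * M i ω j k ∂μ)
        = (∫ ω, Δ i ω j * Δ i ω k ∂μ) * Mbar j k := by
      intro j k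
      have hφ : Measurable fun x : Fin n → ℝ => x j * x k :=
        (measurable_pi_apply j).mul (measurable_pi_apply k)
      have hψ : Measurable fun m : Matrix (Fin n) (Fin n) ℝ => m j k :=
        (measurable_pi_apply k).comp (measurable_pi_apply j)
      have hind : IndepFun (fun ω => Δ i ω j * Δ i ω k) (fun ω => M i ω j k) μ :=
        (hindep i).comp hφ hψ
      have h := hind.integral_mul_eq_mul_integral ((hΔe i j).mul (hΔe i k)).aestronglyMeasurable
        (hMe i j k).aestronglyMeasurable
      rw [show ((fun ω => Δ i ω j * Δ i ω k) * fun ω => M i ω j k)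
          = fun ω => Δ i ω j * Δ i ω k * M i ω j k from rfl] at h
      rw [h, hmean]
    rw [eexp i, ebar i]
    rw [integral_finset_sum _ fun j _ => integrable_finset_sum _ fun k _ => hgint i j k,
      integral_finset_sum _ fun j _ => integrable_finset_sum _ fun k _ =>
        (hprodint i j k).mul_const (Mbar j k)]
    refine Finset.sum_congr rfl fun j _ => ?_
    rw [integral_finset_sum _ fun k _ => hgint i j k,
      integral_finset_sum _ fun k _ => (hprodint i j k).mul_const (Mbar j k)]
    refine Finset.sum_congr rfl fun k _ => ?_
    rw [MeasureTheory.integral_mul_const, hstep j k]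
  -- final assembly
  set c : ℝ := ((t : ℝ) + 1)⁻¹ with hc
  have hcpos : (0:ℝ) < (t : ℝ) + 1 := by positivity
  have hcnn : (0:ℝ) ≤ c := by positivity
  have pointwise : ∀ ω, (c • ∑ i ∈ Finset.range (t + 1), Δ i ω) ⬝ᵥ
      (Mbar *ᵥ (c • ∑ i ∈ Finset.range (t + 1), Δ i ω))
      ≤ c * ∑ i ∈ Finset.range (t + 1), Δ i ω ⬝ᵥ (Mbar *ᵥ Δ i ω) := by
    intro ω
    have hJ := sum_quad_le hMbarpsd (t + 1) (fun i => Δ i ω)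
    push_cast at hJ
    have hscale : (c • ∑ i ∈ Finset.range (t + 1), Δ i ω) ⬝ᵥ
        (Mbar *ᵥ (c • ∑ i ∈ Finset.range (t + 1), Δ i ω))
        = c * (c * ((∑ i ∈ Finset.range (t + 1), Δ i ω) ⬝ᵥ
            (Mbar *ᵥ (∑ i ∈ Finset.range (t + 1), Δ i ω)))) := by
      rw [mulVec_smul, dotProduct_smul, smul_dotProduct]
      simp [smul_eq_mul]
    rw [hscale]
    have step : c * ((∑ i ∈ Finset.range (t + 1), Δ i ω) ⬝ᵥ
        (Mbar *ᵥ (∑ i ∈ Finset.range (t + 1), Δ i ω)))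
        ≤ c * (((t : ℝ) + 1) * ∑ i ∈ Finset.range (t + 1), Δ i ω ⬝ᵥ (Mbar *ᵥ Δ i ω)) :=
      mul_le_mul_of_nonneg_left hJ hcnn
    have hid : c * (((t : ℝ) + 1)) = 1 := inv_mul_cancel₀ (ne_of_gt hcpos)
    calc c * (c * ((∑ i ∈ Finset.range (t + 1), Δ i ω) ⬝ᵥ
          (Mbar *ᵥ (∑ i ∈ Finset.range (t + 1), Δ i ω))))
        ≤ c * (c * (((t : ℝ) + 1) * ∑ i ∈ Finset.range (t + 1), Δ i ω ⬝ᵥ (Mbar *ᵥ Δ i ω))) := by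
          refine mul_le_mul_of_nonneg_left ?_ hcnn
          exact mul_le_mul_of_nonneg_left hJ hcnn
      _ = c * ∑ i ∈ Finset.range (t + 1), Δ i ω ⬝ᵥ (Mbar *ᵥ Δ i ω) := by
          rw [← mul_assoc c ((t:ℝ)+1), hid, one_mul]
  have hgint2 : Integrable (fun ω => c * ∑ i ∈ Finset.range (t + 1),
      Δ i ω ⬝ᵥ (Mbar *ᵥ Δ i ω)) μ :=
    (integrable_finset_sum _ fun i _ => hqbarint i).const_mul c
  calc (∫ ω, (c • ∑ i ∈ Finset.range (t + 1), Δ i ω) ⬝ᵥ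
        (Mbar *ᵥ (c • ∑ i ∈ Finset.range (t + 1), Δ i ω)) ∂μ)
      ≤ ∫ ω, c * ∑ i ∈ Finset.range (t + 1), Δ i ω ⬝ᵥ (Mbar *ᵥ Δ i ω) ∂μ := by
        refine integral_mono_of_nonneg
          (Filter.Eventually.of_forall fun ω => psd_dot hMbarpsd _) hgint2
          (Filter.Eventually.of_forall pointwise)
    _ = c * ∑ i ∈ Finset.range (t + 1), ∫ ω, Δ i ω ⬝ᵥ (Mbar *ᵥ Δ i ω) ∂μ := by
        rw [MeasureTheory.integral_const_mul,
          integral_finset_sum _ fun i _ => hqbarint i]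
    _ = c * ∑ i ∈ Finset.range (t + 1), ∫ ω, Δ i ω ⬝ᵥ (M i ω *ᵥ Δ i ω) ∂μ := by
        rw [Finset.sum_congr rfl fun i _ => hint_eq i]
    _ ≤ c * ∫ ω, Δ 0 ω ⬝ᵥ Δ 0 ω ∂μ := by
        refine mul_le_mul_of_nonneg_left ?_ hcnn
        rw [← integral_finset_sum _ fun i _ => hqint i]
        exact integral_mono (integrable_finset_sum _ fun i _ => hqint i) (hNint 0)
          fun ω => htelq (t + 1) ω
    _ = (∫ ω, Δ 0 ω ⬝ᵥ Δ 0 ω ∂μ) / ((t : ℝ) + 1) := by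
        rw [mul_comm, div_eq_mul_inv]
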